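/- arXiv:1509.01541 — 4 statements merged into one kernel-verified Lean document; each statement's English description precedes it below -/
import Mathlib

section
/- Under the hypotheses of the previous two bounds (Z with mean μ and covariance I_k, U₁ with mean 0 and covariance A, R = P'P positive definite, ψ₀ = λ_min(R), ψ₁ = max_i|λ_i(B)| with B = [[0,P'],[P,0]]), the quantity η‡ = E[|U₁'PZ|/(Z'RZ)] satisfies, for every α > 0, η‡ ≤ (α²ψ₁/2)·ω + ψ₁·(tr(A)+k+μ'μ)/(α²ψ₀), where ω = E[1/(Z'RZ)]. -/
open Matrix MeasureTheory

lemma quad_abs_le {n : Type*} [Fintype n] [DecidableEq n] {M : Matrix n n ℝ}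
    (hM : M.IsHermitian) {c : ℝ} (hc : ∀ i, |hM.eigenvalues i| ≤ c) (w : n → ℝ) :
    |w ⬝ᵥ M *ᵥ w| ≤ c * (w ⬝ᵥ w) := by
  set U : Matrix n n ℝ := (hM.eigenvectorUnitary : Matrix n n ℝ) with hU
  have hUmem := hM.eigenvectorUnitary.2
  have hU1 : U * star U = 1 := (Matrix.mem_unitaryGroup_iff).mp hUmem
  have hU2 : star U * U = 1 := (Matrix.mem_unitaryGroup_iff').mp hUmem
  set y : n → ℝ := star U *ᵥ w with hy
  have hsU : star U = Uᵀ := by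
    ext i j; simp [Matrix.star_apply, Matrix.conjTranspose_apply]
  have hwU : w ᵥ* U = y := by
    rw [hy, hsU, mulVec_transpose]
  have hDiag : M = U * diagonal hM.eigenvalues * star U := by
    have := hM.spectral_theorem
    simpa using this
  have hquad : w ⬝ᵥ M *ᵥ w = ∑ i, hM.eigenvalues i * y i ^ 2 := by
    conv_lhs => rw [hDiag]
    rw [← mulVec_mulVec, ← mulVec_mulVec, dotProduct_mulVec, hwU]
    simp [dotProduct, mulVec_diagonal]
    refine Finset.sum_congr rfl fun i _ => by ring
  have hnorm : w ⬝ᵥ w = ∑ i, y i ^ 2 := by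
    have hw' : U *ᵥ y = w := by
      rw [hy, mulVec_mulVec, hU1, one_mulVec]
    calc w ⬝ᵥ w = (U *ᵥ y) ⬝ᵥ (U *ᵥ y) := by rw [hw']
    _ = (y ᵥ* Uᵀ) ⬝ᵥ (U *ᵥ y) := by rw [vecMul_transpose]
    _ = y ⬝ᵥ ((Uᵀ * U) *ᵥ y) := by rw [← dotProduct_mulVec, mulVec_mulVec]
    _ = ∑ i, y i ^ 2 := by
        rw [← hsU, hU2, one_mulVec]
        simp [dotProduct, sq]
  rw [hquad, hnorm]
  calc |∑ i, hM.eigenvalues i * y i ^ 2| ≤ ∑ i, |hM.eigenvalues i * y i ^ 2| :=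
        Finset.abs_sum_le_sum_abs _ _
  _ ≤ ∑ i, c * y i ^ 2 := by
      refine Finset.sum_le_sum fun i _ => ?_
      rw [abs_mul, abs_pow, sq_abs]
      exact mul_le_mul_of_nonneg_right (hc i) (sq_nonneg _)
  _ = c * ∑ i, y i ^ 2 := by rw [Finset.mul_sum]

set_option maxHeartbeats 1000000 in
/-- With `Z` of mean `m` and covariance `I_k`, `U₁` of mean `0` and covariance `A`,
`R = P'P` positive definite, `ψ₀ = λ_min(R)` and `ψ₁ = max_i |λ_i(B)|` for
`B = [[0,P'],[P,0]]`, the quantity `η‡ = E[|U₁'PZ| / (Z'RZ)]` satisfies, for every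
`α > 0`, `η‡ ≤ (α²ψ₁/2)·ω + ψ₁·(tr(A)+k+m'm)/(α²ψ₀)`, where `ω = E[1/(Z'RZ)]`
(assumed finite). -/
theorem eta_ddag_bound
    {Ω : Type*} [MeasurableSpace Ω] (μ : Measure Ω) [IsProbabilityMeasure μ]
    (k : ℕ) (hk : 0 < k) (P : Matrix (Fin k) (Fin k) ℝ) (hP : IsUnit P)
    (hR : (Pᵀ * P).PosDef)
    (hB : (Matrix.fromBlocks (0 : Matrix (Fin k) (Fin k) ℝ) Pᵀ P 0).IsHermitian)
    (A : Matrix (Fin k) (Fin k) ℝ)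
    (Z U₁ : Ω → Fin k → ℝ) (hZ : AEMeasurable Z μ) (hU : AEMeasurable U₁ μ)
    (m : Fin k → ℝ)
    (hZ1 : ∀ i, Integrable (fun ω => Z ω i) μ)
    (hZ2 : ∀ i j, Integrable (fun ω => Z ω i * Z ω j) μ)
    (hU1 : ∀ i, Integrable (fun ω => U₁ ω i) μ)
    (hU2 : ∀ i j, Integrable (fun ω => U₁ ω i * U₁ ω j) μ)
    (hZmean : ∀ i, ∫ ω, Z ω i ∂μ = m i)
    (hZcov : ∀ i j, ∫ ω, (Z ω i - m i) * (Z ω j - m j) ∂μ = if i = j then 1 else 0)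
    (hUmean : ∀ i, ∫ ω, U₁ ω i ∂μ = 0)
    (hUcov : ∀ i j, ∫ ω, U₁ ω i * U₁ ω j ∂μ = A i j)
    (hω : ∫⁻ ω, ENNReal.ofReal ((Z ω ⬝ᵥ (Pᵀ * P).mulVec (Z ω))⁻¹) ∂μ ≠ ⊤)
    (α : ℝ) (hα : 0 < α) :
    ∫⁻ ω, ENNReal.ofReal (|U₁ ω ⬝ᵥ P.mulVec (Z ω)| / (Z ω ⬝ᵥ (Pᵀ * P).mulVec (Z ω))) ∂μ
      ≤ ENNReal.ofReal (α ^ 2 *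
            (Finset.univ.sup' ⟨Sum.inl ⟨0, hk⟩, Finset.mem_univ _⟩
              fun i => |hB.eigenvalues i|) / 2)
          * ∫⁻ ω, ENNReal.ofReal ((Z ω ⬝ᵥ (Pᵀ * P).mulVec (Z ω))⁻¹) ∂μ
        + ENNReal.ofReal
          ((Finset.univ.sup' ⟨Sum.inl ⟨0, hk⟩, Finset.mem_univ _⟩
              fun i => |hB.eigenvalues i|)
            * (A.trace + k + m ⬝ᵥ m)
            / (α ^ 2 *
                (Finset.univ.inf' ⟨⟨0, hk⟩, Finset.mem_univ _⟩
                  fun i => hR.1.eigenvalues i))) := by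
  set ψ₁ : ℝ := Finset.univ.sup' ⟨Sum.inl ⟨0, hk⟩, Finset.mem_univ _⟩
      (fun i => |hB.eigenvalues i|) with hψ₁def
  set ψ₀ : ℝ := Finset.univ.inf' ⟨⟨0, hk⟩, Finset.mem_univ _⟩
      (fun i => hR.1.eigenvalues i) with hψ₀def
  have hψ₁c : ∀ i, |hB.eigenvalues i| ≤ ψ₁ := fun i => by
    rw [hψ₁def]
    exact Finset.le_sup' (fun i => |hB.eigenvalues i|) (Finset.mem_univ i)
  -- ψ₀ is positive
  obtain ⟨i₀, -, hi₀⟩ := Finset.exists_mem_eq_inf' (⟨⟨0, hk⟩, Finset.mem_univ _⟩ :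
      (Finset.univ : Finset (Fin k)).Nonempty) (fun i => hR.1.eigenvalues i)
  have hψ₀pos : 0 < ψ₀ := by rw [hψ₀def, hi₀]; exact hR.eigenvalues_pos i₀
  -- auxiliary: quadratic form of R
  have hdot : ∀ x : Fin k → ℝ, x ⬝ᵥ (Pᵀ * P) *ᵥ x = (P *ᵥ x) ⬝ᵥ (P *ᵥ x) := by
    intro x
    rw [← mulVec_mulVec, dotProduct_mulVec, vecMul_transpose]
  have hdotnn : ∀ x : Fin k → ℝ, 0 ≤ x ⬝ᵥ x := fun x =>
    Finset.sum_nonneg fun i _ => mul_self_nonneg _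
  -- ψ₀ ≤ ψ₁ ^ 2
  set v : Fin k → ℝ := ⇑(hR.1.eigenvectorBasis i₀) with hv
  have hvv : v ⬝ᵥ v = 1 := by
    have h1 : ‖hR.1.eigenvectorBasis i₀‖ = 1 := hR.1.eigenvectorBasis.orthonormal.1 i₀
    have h2 : (inner ℝ (hR.1.eigenvectorBasis i₀) (hR.1.eigenvectorBasis i₀) : ℝ) = 1 := by
      rw [real_inner_self_eq_norm_sq, h1]; norm_num
    rw [← h2]; simp only [PiLp.inner_apply, RCLike.inner_apply, conj_trivial, dotProduct, v, mul_comm]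
  have hRv : (Pᵀ * P) *ᵥ v = ψ₀ • v := by
    rw [hψ₀def, hi₀]
    exact hR.1.mulVec_eigenvectorBasis i₀
  have hPv : (P *ᵥ v) ⬝ᵥ (P *ᵥ v) = ψ₀ := by
    rw [← hdot, hRv, dotProduct_smul, smul_eq_mul, hvv, mul_one]
  set t : ℝ := Real.sqrt ψ₀ with htdef
  have ht2 : t ^ 2 = ψ₀ := Real.sq_sqrt hψ₀pos.le
  have htpos : 0 < t := Real.sqrt_pos.mpr hψ₀pos
  have hψ₀ψ₁ : ψ₀ ≤ ψ₁ ^ 2 ∧ 0 < ψ₁ := by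
    set u : Fin k → ℝ := t⁻¹ • (P *ᵥ v) with hu
    set w : Fin k ⊕ Fin k → ℝ := Sum.elim v u with hw
    have hBw : w ⬝ᵥ (Matrix.fromBlocks (0 : Matrix (Fin k) (Fin k) ℝ) Pᵀ P 0) *ᵥ w
        = 2 * t := by
      rw [hw, fromBlocks_mulVec]
      simp only [zero_mulVec, zero_add, add_zero, Sum.elim_comp_inl, Sum.elim_comp_inr]
      rw [sumElim_dotProduct_sumElim]
      have h1 : v ⬝ᵥ Pᵀ *ᵥ u = (P *ᵥ v) ⬝ᵥ u := by
        rw [dotProduct_mulVec, vecMul_transpose]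
      have h2 : (P *ᵥ v) ⬝ᵥ u = t := by
        rw [hu, dotProduct_smul, smul_eq_mul, hPv, ← ht2]
        field_simp
      have h3 : u ⬝ᵥ P *ᵥ v = t := by
        rw [hu, smul_dotProduct, smul_eq_mul, hPv, ← ht2]
        field_simp
      rw [h1, h2, h3]; ring
    have hww : w ⬝ᵥ w = 2 := by
      rw [hw, sumElim_dotProduct_sumElim, hvv, hu, smul_dotProduct, dotProduct_smul,
        smul_eq_mul, smul_eq_mul, hPv, ← ht2]
      field_simp
      ring
    have habs := quad_abs_le hB hψ₁c w
    rw [hBw, hww] at habs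
    have htψ : t ≤ ψ₁ := by
      have h2t : 2 * t ≤ |2 * t| := le_abs_self _
      linarith
    constructor
    · calc ψ₀ = t ^ 2 := ht2.symm
      _ ≤ ψ₁ ^ 2 := by nlinarith
    · linarith
  obtain ⟨hψ₀ψ₁, hψ₁pos⟩ := hψ₀ψ₁
  have hαψ : 0 < α ^ 2 * ψ₁ := by positivity
  -- pointwise bound
  have key : ∀ ω', |U₁ ω' ⬝ᵥ P *ᵥ Z ω'| / (Z ω' ⬝ᵥ (Pᵀ * P) *ᵥ Z ω')
      ≤ α ^ 2 * ψ₁ / 2 * (Z ω' ⬝ᵥ (Pᵀ * P) *ᵥ Z ω')⁻¹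
        + (U₁ ω' ⬝ᵥ U₁ ω') / (2 * (α ^ 2 * ψ₁)) := by
    intro ω'
    set z : Fin k → ℝ := Z ω'
    set u : Fin k → ℝ := U₁ ω'
    set q : ℝ := z ⬝ᵥ (Pᵀ * P) *ᵥ z with hq
    have hq0 : 0 ≤ q := by rw [hq, hdot]; exact hdotnn _
    have hs0 : 0 ≤ u ⬝ᵥ u := hdotnn u
    rcases hq0.eq_or_lt with hq0' | hqpos
    · have hPz : P *ᵥ z = 0 := by
        have : (P *ᵥ z) ⬝ᵥ (P *ᵥ z) = 0 := by rw [← hdot, ← hq, ← hq0']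
        exact dotProduct_self_eq_zero.mp this
      rw [hPz, dotProduct_zero, abs_zero, zero_div, ← hq0']
      positivity
    · -- Cauchy–Schwarz
      have hcs : (u ⬝ᵥ P *ᵥ z) ^ 2 ≤ (u ⬝ᵥ u) * q := by
        rw [hq, hdot]
        have := Finset.sum_mul_sq_le_sq_mul_sq Finset.univ u (P *ᵥ z)
        simpa [dotProduct, sq] using this
      set b : ℝ := |u ⬝ᵥ P *ᵥ z| with hb
      have hb0 : 0 ≤ b := abs_nonneg _
      have hb2 : b ^ 2 ≤ (u ⬝ᵥ u) * q := by rw [hb, sq_abs]; exact hcs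
      have h2 : b * (2 * (α ^ 2 * ψ₁)) ≤ (α ^ 2 * ψ₁) ^ 2 + (u ⬝ᵥ u) * q := by
        nlinarith [sq_nonneg (b - α ^ 2 * ψ₁)]
      rw [div_le_iff₀ hqpos]
      refine (mul_le_mul_iff_of_pos_right (show (0:ℝ) < 2 * (α ^ 2 * ψ₁) by positivity)).mp ?_
      have hR2 : (α ^ 2 * ψ₁ / 2 * q⁻¹ + (u ⬝ᵥ u) / (2 * (α ^ 2 * ψ₁))) * q
          * (2 * (α ^ 2 * ψ₁)) = (α ^ 2 * ψ₁) ^ 2 + (u ⬝ᵥ u) * q := by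
        field_simp
      rw [hR2]
      exact h2
  -- measurability
  have hRq_meas : AEMeasurable (fun ω => Z ω ⬝ᵥ (Pᵀ * P) *ᵥ Z ω) μ := by
    have hcont : Continuous fun x : Fin k → ℝ => x ⬝ᵥ (Pᵀ * P) *ᵥ x := by
      simp only [dotProduct, mulVec]
      fun_prop
    exact hcont.measurable.comp_aemeasurable hZ
  have hg_meas : AEMeasurable
      (fun ω => ENNReal.ofReal (α ^ 2 * ψ₁ / 2 * (Z ω ⬝ᵥ (Pᵀ * P) *ᵥ Z ω)⁻¹)) μ :=
    ((hRq_meas.inv).const_mul _).ennreal_ofReal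
  -- integrability of u ⬝ᵥ u and its integral
  have hUUint : Integrable (fun ω => U₁ ω ⬝ᵥ U₁ ω) μ := by
    simp only [dotProduct]
    exact integrable_finset_sum _ fun i _ => hU2 i i
  have hUUval : ∫ ω, U₁ ω ⬝ᵥ U₁ ω ∂μ = A.trace := by
    simp only [dotProduct]
    rw [integral_finset_sum _ fun i _ => hU2 i i]
    simp only [hUcov]
    rfl
  have htr0 : 0 ≤ A.trace := by
    rw [← hUUval]
    exact integral_nonneg fun ω => hdotnn _
  -- main estimate
  calc ∫⁻ ω, ENNReal.ofReal (|U₁ ω ⬝ᵥ P *ᵥ Z ω| / (Z ω ⬝ᵥ (Pᵀ * P) *ᵥ Z ω)) ∂μ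
      ≤ ∫⁻ ω, (ENNReal.ofReal (α ^ 2 * ψ₁ / 2 * (Z ω ⬝ᵥ (Pᵀ * P) *ᵥ Z ω)⁻¹)
          + ENNReal.ofReal ((U₁ ω ⬝ᵥ U₁ ω) / (2 * (α ^ 2 * ψ₁)))) ∂μ := by
        refine lintegral_mono fun ω => ?_
        exact le_trans (ENNReal.ofReal_le_ofReal (key ω)) ENNReal.ofReal_add_le
  _ = ∫⁻ ω, ENNReal.ofReal (α ^ 2 * ψ₁ / 2 * (Z ω ⬝ᵥ (Pᵀ * P) *ᵥ Z ω)⁻¹) ∂μ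
        + ∫⁻ ω, ENNReal.ofReal ((U₁ ω ⬝ᵥ U₁ ω) / (2 * (α ^ 2 * ψ₁))) ∂μ :=
      lintegral_add_left' hg_meas _
  _ ≤ ENNReal.ofReal (α ^ 2 * ψ₁ / 2)
        * ∫⁻ ω, ENNReal.ofReal ((Z ω ⬝ᵥ (Pᵀ * P) *ᵥ Z ω)⁻¹) ∂μ
        + ENNReal.ofReal (ψ₁ * (A.trace + k + m ⬝ᵥ m) / (α ^ 2 * ψ₀)) := by
      gcongr
      · -- first term (an equality)
        have : ∀ ω', ENNReal.ofReal (α ^ 2 * ψ₁ / 2 * (Z ω' ⬝ᵥ (Pᵀ * P) *ᵥ Z ω')⁻¹)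
            = ENNReal.ofReal (α ^ 2 * ψ₁ / 2)
              * ENNReal.ofReal ((Z ω' ⬝ᵥ (Pᵀ * P) *ᵥ Z ω')⁻¹) := fun ω' =>
          ENNReal.ofReal_mul (by positivity)
        simp_rw [this]
        rw [lintegral_const_mul'' (f := fun ω => ENNReal.ofReal ((Z ω ⬝ᵥ (Pᵀ * P) *ᵥ Z ω)⁻¹)) _ (hRq_meas.inv.ennreal_ofReal)]
      · -- second term
        have hnn : 0 ≤ᵐ[μ] fun ω => (U₁ ω ⬝ᵥ U₁ ω) / (2 * (α ^ 2 * ψ₁)) :=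
          Filter.Eventually.of_forall fun ω =>
            div_nonneg (hdotnn _) (by nlinarith [hαψ])
        rw [← ofReal_integral_eq_lintegral_ofReal (hUUint.div_const _) hnn]
        refine ENNReal.ofReal_le_ofReal ?_
        rw [integral_div, hUUval]
        have hm0 : 0 ≤ m ⬝ᵥ m := hdotnn m
        have hk1 : (1:ℝ) ≤ (k:ℝ) := by exact_mod_cast hk
        have ha2 : (0:ℝ) < α ^ 2 := pow_pos hα 2
        rw [div_le_div_iff₀ (by nlinarith : (0:ℝ) < 2 * (α ^ 2 * ψ₁))
          (mul_pos ha2 hψ₀pos)]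
        have h1 : ψ₀ * A.trace ≤ ψ₁ ^ 2 * A.trace :=
          mul_le_mul_of_nonneg_right hψ₀ψ₁ htr0
        have h2 : α ^ 2 * (ψ₀ * A.trace) ≤ α ^ 2 * (ψ₁ ^ 2 * A.trace) :=
          mul_le_mul_of_nonneg_left h1 ha2.le
        have h4 : 0 ≤ α ^ 2 * (ψ₁ ^ 2 * (A.trace + 2 * k + 2 * (m ⬝ᵥ m))) := by
          have : (0:ℝ) ≤ A.trace + 2 * k + 2 * (m ⬝ᵥ m) := by positivity
          positivity
        nlinarith [h2, h4]
end

section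
/- Let X have density f_X(x) = ∫₀^∞ φ_{μ, z⁻¹Σ}(x) κ(z) dz where φ_{μ,Σ} is the N_k(μ,Σ) density, Σ = I_k, k ≥ 3, and κ is a weighting function with 0 < ∫₀^∞ t|κ(t)| dt < ∞. Then E[1/(X'X)] is finite; more precisely |E[1/(X'X)]| ≤ (1/(k−2))·∫₀^∞ t|κ(t)| dt. -/
open Matrix MeasureTheory ProbabilityTheory

section Aux
open Real Set Filter Matrix MeasureTheory ProbabilityTheory

lemma dim1 (μ w s : ℝ) (hw : 0 < w) (hs : 0 ≤ s) :
    Integrable (fun x => rexp (-(s * x^2)) * gaussianPDFReal μ w.toNNReal x) ∧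
    ∫ x, rexp (-(s * x^2)) * gaussianPDFReal μ w.toNNReal x
      ≤ Real.sqrt ((1 + 2*w*s)⁻¹) := by
  have hπ := Real.pi_pos
  set a : ℝ := s + (2*w)⁻¹ with ha_def
  have ha : 0 < a := by positivity
  set x₀ : ℝ := μ / (2*w*s+1) with hx0
  have hden : (0:ℝ) < 2*w*s+1 := by positivity
  have hcoe : ((w.toNNReal : ℝ)) = w := Real.coe_toNNReal w hw.le
  set D : ℝ → ℝ := fun x => (Real.sqrt (2*π*w))⁻¹ * rexp (-(a*(x-x₀)^2)) with hD
  have hpt : ∀ x, rexp (-(s * x^2)) * gaussianPDFReal μ w.toNNReal x ≤ D x := by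
    intro x
    rw [gaussianPDFReal, hcoe]
    rw [mul_comm (rexp _), mul_assoc, ← Real.exp_add]
    apply mul_le_mul_of_nonneg_left _ (by positivity)
    apply Real.exp_le_exp.2
    have key : -(x-μ)^2/(2*w) + -(s*x^2) =
        -(a*(x-x₀)^2) + (μ^2/(2*w*(2*w*s+1)) - μ^2/(2*w)) := by
      rw [hx0, ha_def]
      field_simp [hx0, ha_def]
      ring
    rw [key]
    have : μ^2/(2*w*(2*w*s+1)) - μ^2/(2*w) ≤ 0 := by
      rw [sub_nonpos]
      apply div_le_div_of_nonneg_left (by positivity) (by positivity)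
      nlinarith [sq_nonneg μ, mul_nonneg (mul_nonneg hw.le hs) hw.le]
    linarith
  have hnn : ∀ x, 0 ≤ rexp (-(s * x^2)) * gaussianPDFReal μ w.toNNReal x :=
    fun x => mul_nonneg (Real.exp_nonneg _) (gaussianPDFReal_nonneg _ _ _)
  have hDint : Integrable D := by
    apply Integrable.const_mul
    have := integrable_exp_neg_mul_sq ha
    simpa [sub_eq_add_neg] using this.comp_sub_right x₀
  have hcont : Continuous (fun x => rexp (-(s * x^2)) * gaussianPDFReal μ w.toNNReal x) := by
    unfold gaussianPDFReal
    fun_prop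
  have hint : Integrable (fun x => rexp (-(s * x^2)) * gaussianPDFReal μ w.toNNReal x) := by
    refine hDint.mono hcont.aestronglyMeasurable (Filter.Eventually.of_forall fun x => ?_)
    rw [Real.norm_eq_abs, Real.norm_eq_abs, abs_of_nonneg (hnn x),
      abs_of_nonneg (le_trans (hnn x) (hpt x))]
    exact hpt x
  refine ⟨hint, ?_⟩
  have hDval : ∫ x, D x = Real.sqrt ((1 + 2*w*s)⁻¹) := by
    rw [hD]
    rw [integral_const_mul]
    have h1 : ∫ x : ℝ, rexp (-(a*(x-x₀)^2)) = Real.sqrt (π/a) := by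
      rw [integral_sub_right_eq_self (μ := volume) (fun y => rexp (-(a*y^2))) x₀]
      simpa [neg_mul] using integral_gaussian a
    rw [h1, ← Real.sqrt_inv, ← Real.sqrt_mul (by positivity)]
    congr 1
    rw [ha_def]
    field_simp [ha_def]
    ring
  rw [← hDval]
  exact integral_mono hint hDint hpt


lemma dimk (k : ℕ) (m : Fin k → ℝ) (w s : ℝ) (hw : 0 < w) (hs : 0 ≤ s) :
    Integrable (fun x : Fin k → ℝ =>
      rexp (-(s * (x ⬝ᵥ x))) * ∏ i, gaussianPDFReal (m i) w.toNNReal (x i)) ∧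
    ∫ x : Fin k → ℝ, rexp (-(s * (x ⬝ᵥ x))) * ∏ i, gaussianPDFReal (m i) w.toNNReal (x i)
      ≤ Real.sqrt ((1+2*w*s)⁻¹) ^ k := by
  have hfun : (fun x : Fin k → ℝ =>
      rexp (-(s * (x ⬝ᵥ x))) * ∏ i, gaussianPDFReal (m i) w.toNNReal (x i))
      = fun x => ∏ i, (fun y => rexp (-(s * y^2)) * gaussianPDFReal (m i) w.toNNReal y) (x i) := by
    funext x
    simp only [Finset.prod_mul_distrib, ← Real.exp_sum]
    congr 2
    simp [dotProduct, Finset.mul_sum, sq]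
  rw [hfun]
  constructor
  · exact Integrable.fintype_prod (𝕜 := ℝ) fun i => (dim1 (m i) w s hw hs).1
  · rw [show (∫ x : Fin k → ℝ, ∏ i, (fun y => rexp (-(s * y^2)) * gaussianPDFReal (m i) w.toNNReal y) (x i)) = ∏ i, ∫ y, rexp (-(s * y^2)) * gaussianPDFReal (m i) w.toNNReal y from
      integral_fintype_prod_eq_prod (fun i => fun y => rexp (-(s * y^2)) * gaussianPDFReal (m i) w.toNNReal y)]
    calc ∏ i, ∫ y, rexp (-(s * y^2)) * gaussianPDFReal (m i) w.toNNReal y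
        ≤ ∏ _i : Fin k, Real.sqrt ((1+2*w*s)⁻¹) := by
          apply Finset.prod_le_prod
          · intro i _
            exact integral_nonneg fun y =>
              mul_nonneg (Real.exp_nonneg _) (gaussianPDFReal_nonneg _ _ _)
          · intro i _
            exact (dim1 (m i) w s hw hs).2
      _ = Real.sqrt ((1+2*w*s)⁻¹) ^ k := by simp


lemma expinv (c : ℝ) (hc : 0 < c) :
    ∫⁻ s in Ioi (0:ℝ), ENNReal.ofReal (rexp (-(c*s))) = ENNReal.ofReal c⁻¹ := by
  have hint : IntegrableOn (fun s : ℝ => rexp (-(c*s))) (Ioi 0) := by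
    simpa [neg_mul] using exp_neg_integrableOn_Ioi 0 hc
  rw [← ofReal_integral_eq_lintegral_ofReal hint
    (Filter.Eventually.of_forall fun s => Real.exp_nonneg _)]
  congr 1
  have hderiv : ∀ s ∈ Ici (0:ℝ), HasDerivAt (fun s => -c⁻¹ * rexp (-(c*s))) (rexp (-(c*s))) s := by
    intro s _
    have h1 : HasDerivAt (fun s : ℝ => -(c*s)) (-c) s := by
      simpa [Pi.neg_def] using ((hasDerivAt_id s).const_mul c).neg
    have := (Real.hasDerivAt_exp (-(c*s))).comp s h1
    have h2 := this.const_mul (-c⁻¹)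
    refine h2.congr_deriv ?_
    field_simp
  have hlim : Tendsto (fun s => -c⁻¹ * rexp (-(c*s))) atTop (nhds 0) := by
    have : Tendsto (fun s : ℝ => rexp (-(c*s))) atTop (nhds 0) := by
      simp_rw [neg_mul_eq_neg_mul]
      exact Real.tendsto_exp_atBot.comp (tendsto_id.const_mul_atTop_of_neg (neg_neg_iff_pos.2 hc))
    simpa using this.const_mul (-c⁻¹)
  have := integral_Ioi_of_hasDerivAt_of_nonneg' hderiv
    (fun s _ => (Real.exp_nonneg _)) hlim
  rw [this]
  simp


lemma sint (k : ℕ) (hk : 3 ≤ k) (w : ℝ) (hw : 0 < w) :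
    IntegrableOn (fun s => Real.sqrt ((1+2*w*s)⁻¹) ^ k) (Ioi (0:ℝ)) ∧
    ∫ s in Ioi (0:ℝ), Real.sqrt ((1+2*w*s)⁻¹) ^ k = (w * ((k:ℝ)-2))⁻¹ := by
  have hk2 : (2:ℝ) < (k:ℝ) := by exact_mod_cast lt_of_lt_of_le (by norm_num) hk
  set p : ℝ := 1 - (k:ℝ)/2 with hp
  have hpneg : p < 0 := by rw [hp]; linarith
  have hpne : p ≠ 0 := ne_of_lt hpneg
  set c₀ : ℝ := (2*w*p)⁻¹ with hc0
  set g : ℝ → ℝ := fun s => c₀ * (1+2*w*s) ^ p with hg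
  have hderiv : ∀ s ∈ Ici (0:ℝ), HasDerivAt g (Real.sqrt ((1+2*w*s)⁻¹) ^ k) s := by
    intro s hs
    have hs0 : (0:ℝ) ≤ s := hs
    have hu : (0:ℝ) < 1+2*w*s := by positivity
    have h1 : HasDerivAt (fun s : ℝ => 1+2*w*s) (2*w) s := by
      simpa using ((hasDerivAt_id s).const_mul (2*w)).const_add 1
    have h2 := ((Real.hasDerivAt_rpow_const (x := 1+2*w*s) (p := p)
      (Or.inl hu.ne')).comp s h1).const_mul c₀
    refine h2.congr_deriv ?_
    have hval : Real.sqrt ((1+2*w*s)⁻¹) ^ k = (1+2*w*s) ^ (p - 1) := by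
      rw [Real.sqrt_eq_rpow, ← Real.rpow_natCast (((1+2*w*s)⁻¹) ^ (1/2 : ℝ)) k,
        ← Real.rpow_mul (by positivity), ← Real.rpow_neg_one (1+2*w*s), ← Real.rpow_mul hu.le]
      congr 1
      rw [hp]; ring
    rw [hval, hc0]
    field_simp
  have hpos : ∀ s ∈ Ioi (0:ℝ), 0 ≤ Real.sqrt ((1+2*w*s)⁻¹) ^ k :=
    fun s _ => pow_nonneg (Real.sqrt_nonneg _) k
  have hlim : Tendsto g atTop (nhds 0) := by
    have hbase : Tendsto (fun s : ℝ => 1+2*w*s) atTop atTop :=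
      tendsto_atTop_add_const_left _ 1 (tendsto_id.const_mul_atTop (by positivity))
    have : Tendsto (fun s : ℝ => (1+2*w*s) ^ p) atTop (nhds 0) := by
      have := (tendsto_rpow_neg_atTop (y := -p) (by linarith)).comp hbase
      simpa [Function.comp_def] using this
    simpa using this.const_mul c₀
  constructor
  · exact integrableOn_Ioi_deriv_of_nonneg' hderiv hpos hlim
  · rw [integral_Ioi_of_hasDerivAt_of_nonneg' hderiv hpos hlim]
    rw [hg]
    simp only [mul_zero, add_zero, Real.one_rpow]
    rw [hc0, hp]
    rw [show 2*w*(1-(k:ℝ)/2) = -(w*((k:ℝ)-2)) by ring, inv_neg]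
    ring


lemma keyt (k : ℕ) (hk : 3 ≤ k) (m : Fin k → ℝ) (t : ℝ) (ht : 0 < t) :
    ∫⁻ x : Fin k → ℝ,
        ENNReal.ofReal ((x ⬝ᵥ x)⁻¹ * ∏ i, gaussianPDFReal (m i) (t⁻¹).toNNReal (x i))
      ≤ ENNReal.ofReal (t / ((k:ℝ) - 2)) := by
  have hk2 : (2:ℝ) < (k:ℝ) := by exact_mod_cast lt_of_lt_of_le (by norm_num) hk
  set w : ℝ := t⁻¹ with hwdef
  have hw : 0 < w := inv_pos.2 ht
  set G : (Fin k → ℝ) → ℝ := fun x => ∏ i, gaussianPDFReal (m i) w.toNNReal (x i) with hG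
  have hGnn : ∀ x, 0 ≤ G x := fun x =>
    Finset.prod_nonneg fun i _ => gaussianPDFReal_nonneg _ _ _
  have hGcont : Continuous G := by
    unfold G
    unfold gaussianPDFReal
    fun_prop
  have hdotcont : Continuous (fun x : Fin k → ℝ => x ⬝ᵥ x) := by
    simp only [dotProduct]
    fun_prop
  -- step 1 : a.e. rewrite
  have step1 : ∫⁻ x : Fin k → ℝ, ENNReal.ofReal ((x ⬝ᵥ x)⁻¹ * G x)
      = ∫⁻ x : Fin k → ℝ, ∫⁻ s in Ioi (0:ℝ), ENNReal.ofReal (rexp (-(s * (x ⬝ᵥ x))) * G x) := by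
    refine lintegral_congr_ae ?_
    have h00 : (volume : Measure (Fin k → ℝ)) {0} = 0 := by
      haveI : Nonempty (Fin k) := ⟨⟨0, by omega⟩⟩
      rw [volume_pi]
      exact measure_singleton _
    have h0 : ∀ᵐ x : Fin k → ℝ, x ≠ 0 := ae_iff.2 (by simpa using h00)
    filter_upwards [h0] with x hx
    have hc : 0 < x ⬝ᵥ x := by
      have hnn : 0 ≤ x ⬝ᵥ x := Finset.sum_nonneg fun i _ => mul_self_nonneg _
      rcases lt_or_eq_of_le hnn with h | h
      · exact h
      · exact absurd ((dotProduct_self_eq_zero (v := x)).1 h.symm) hx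
    have : ∫⁻ s in Ioi (0:ℝ), ENNReal.ofReal (rexp (-(s * (x ⬝ᵥ x))) * G x)
        = (∫⁻ s in Ioi (0:ℝ), ENNReal.ofReal (rexp (-((x ⬝ᵥ x) * s)))) * ENNReal.ofReal (G x) := by
      rw [← lintegral_mul_const (f := fun s : ℝ => ENNReal.ofReal (rexp (-((x ⬝ᵥ x) * s)))) _ (((measurable_id'.const_mul (x ⬝ᵥ x)).neg.exp).ennreal_ofReal)]
      congr 1 with s
      rw [← ENNReal.ofReal_mul (Real.exp_nonneg _), mul_comm s]
    rw [this, expinv _ hc, ← ENNReal.ofReal_mul (by positivity)]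
  rw [step1]
  -- step 2 : Tonelli
  have hmeas : Measurable (fun q : (Fin k → ℝ) × ℝ => ENNReal.ofReal (rexp (-(q.2 * (q.1 ⬝ᵥ q.1))) * G q.1)) := by
    apply Measurable.ennreal_ofReal
    exact (((measurable_snd.mul (hdotcont.measurable.comp measurable_fst)).neg.exp).mul
      (hGcont.measurable.comp measurable_fst))
  have step2 : ∫⁻ x : Fin k → ℝ, ∫⁻ s in Ioi (0:ℝ), ENNReal.ofReal (rexp (-(s * (x ⬝ᵥ x))) * G x)
      = ∫⁻ s in Ioi (0:ℝ), ∫⁻ x : Fin k → ℝ, ENNReal.ofReal (rexp (-(s * (x ⬝ᵥ x))) * G x) :=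
    lintegral_lintegral_swap hmeas.aemeasurable
  rw [step2]
  -- step 3 : bound inner integral
  have step3 : ∫⁻ s in Ioi (0:ℝ), ∫⁻ x : Fin k → ℝ, ENNReal.ofReal (rexp (-(s * (x ⬝ᵥ x))) * G x)
      ≤ ∫⁻ s in Ioi (0:ℝ), ENNReal.ofReal (Real.sqrt ((1+2*w*s)⁻¹) ^ k) := by
    refine lintegral_mono_ae ?_
    filter_upwards [ae_restrict_mem measurableSet_Ioi] with s hs
    have hs0 : (0:ℝ) ≤ s := le_of_lt hs
    rw [← ofReal_integral_eq_lintegral_ofReal (dimk k m w s hw hs0).1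
      (Filter.Eventually.of_forall fun x => mul_nonneg (Real.exp_nonneg _) (hGnn x))]
    exact ENNReal.ofReal_le_ofReal (dimk k m w s hw hs0).2
  refine le_trans step3 ?_
  -- step 4 : evaluate
  rw [← ofReal_integral_eq_lintegral_ofReal (sint k hk w hw).1
    (Filter.Eventually.of_forall fun s => pow_nonneg (Real.sqrt_nonneg _) k),
    (sint k hk w hw).2]
  apply le_of_eq
  congr 1
  rw [hwdef]
  field_simp


lemma ofReal_int_le {α : Type*} [MeasurableSpace α] (μ : Measure α) (g : α → ℝ)
    (hnn : ∀ a, 0 ≤ g a) :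
    ENNReal.ofReal (∫ a, g a ∂μ) ≤ ∫⁻ a, ENNReal.ofReal (g a) ∂μ := by
  by_cases hg : Integrable g μ
  · exact le_of_eq (ofReal_integral_eq_lintegral_ofReal hg (.of_forall hnn))
  · rw [integral_undef hg]; simp

/-- Let `X` have density `f(x) = ∫₀^∞ φ_{m, t⁻¹I_k}(x) κ(t) dt` on `ℝ^k` (a scale
mixture of `N_k(m, t⁻¹I_k)` Gaussian densities), with `k ≥ 3` and a weighting
function `κ` satisfying `0 < ∫₀^∞ t|κ(t)| dt < ∞`. Then `E[1/(X'X)]` is finite and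
`|E[1/(X'X)]| ≤ (1/(k−2)) · ∫₀^∞ t|κ(t)| dt`. -/
theorem elliptical_inv_norm_sq_moment
    (k : ℕ) (hk : 3 ≤ k) (m : Fin k → ℝ) (κ : ℝ → ℝ) (hκmeas : Measurable κ)
    (hκint : IntegrableOn (fun t => t * |κ t|) (Set.Ioi (0 : ℝ)))
    (hκpos : 0 < ∫ t in Set.Ioi (0 : ℝ), t * |κ t|)
    (f : (Fin k → ℝ) → ℝ)
    (hf : ∀ x, f x = ∫ t in Set.Ioi (0 : ℝ),
        (∏ i, gaussianPDFReal (m i) (Real.toNNReal t⁻¹) (x i)) * κ t) :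
    Integrable (fun x => (x ⬝ᵥ x)⁻¹ * f x) volume ∧
      |∫ x, (x ⬝ᵥ x)⁻¹ * f x|
        ≤ (1 / ((k : ℝ) - 2)) * ∫ t in Set.Ioi (0 : ℝ), t * |κ t| := by
  have hk2 : (2:ℝ) < (k:ℝ) := by exact_mod_cast lt_of_lt_of_le (by norm_num) hk
  set G : ℝ → (Fin k → ℝ) → ℝ :=
    fun t x => ∏ i, gaussianPDFReal (m i) (Real.toNNReal t⁻¹) (x i) with hGdef
  have hGnn : ∀ t x, 0 ≤ G t x := fun t x =>
    Finset.prod_nonneg fun i _ => gaussianPDFReal_nonneg _ _ _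
  have hdotnn : ∀ x : Fin k → ℝ, 0 ≤ x ⬝ᵥ x := fun x =>
    Finset.sum_nonneg fun i _ => mul_self_nonneg _
  -- joint measurability
  have hjm : Measurable (fun q : (Fin k → ℝ) × ℝ => G q.2 q.1) := by
    apply Finset.measurable_prod
    intro i _
    unfold gaussianPDFReal
    simp only [Real.coe_toNNReal', div_eq_mul_inv]
    have h1 : Measurable fun q : (Fin k → ℝ) × ℝ => q.1 i :=
      (measurable_pi_apply i).comp measurable_fst
    have hv : Measurable fun q : (Fin k → ℝ) × ℝ => max (q.2)⁻¹ 0 :=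
      (measurable_snd.inv).max measurable_const
    exact ((Real.continuous_sqrt.measurable.comp (measurable_const.mul hv)).inv).mul
      (Real.measurable_exp.comp ((((h1.sub measurable_const).pow_const 2).neg).mul
        ((measurable_const.mul hv).inv)))
  have hdotm : Measurable (fun x : Fin k → ℝ => x ⬝ᵥ x) := by
    simp only [dotProduct]
    exact Finset.measurable_sum _ fun i _ => (measurable_pi_apply i).mul (measurable_pi_apply i)
  -- measurability of f and F
  have hfeq : f = fun x => ∫ t in Ioi (0:ℝ), G t x * κ t := funext hf
  have hfm : StronglyMeasurable f := by
    rw [hfeq]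
    exact (hjm.mul (hκmeas.comp measurable_snd)).stronglyMeasurable.integral_prod_right'
  set F : (Fin k → ℝ) → ℝ := fun x => (x ⬝ᵥ x)⁻¹ * f x with hFdef
  have hFm : AEStronglyMeasurable F volume :=
    ((hdotm.inv.mul hfm.measurable).stronglyMeasurable).aestronglyMeasurable
  -- pointwise lintegral bound
  have hpt : ∀ x, ENNReal.ofReal |F x|
      ≤ ∫⁻ t in Ioi (0:ℝ), ENNReal.ofReal ((x ⬝ᵥ x)⁻¹ * G t x) * ENNReal.ofReal |κ t| := by
    intro x
    have h1 : |F x| ≤ (x ⬝ᵥ x)⁻¹ * ∫ t in Ioi (0:ℝ), G t x * |κ t| := by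
      rw [hFdef]
      simp only [abs_mul, abs_of_nonneg (inv_nonneg.2 (hdotnn x))]
      apply mul_le_mul_of_nonneg_left _ (inv_nonneg.2 (hdotnn x))
      rw [hf x]
      calc |∫ t in Ioi (0:ℝ), G t x * κ t| = ‖∫ t in Ioi (0:ℝ), G t x * κ t‖ :=
            (Real.norm_eq_abs _).symm
        _ ≤ ∫ t in Ioi (0:ℝ), ‖G t x * κ t‖ :=
            norm_integral_le_integral_norm (fun t => G t x * κ t)
        _ = ∫ t in Ioi (0:ℝ), G t x * |κ t| := by
            congr 1 with t
            rw [Real.norm_eq_abs, abs_mul, abs_of_nonneg (hGnn t x)]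
    calc ENNReal.ofReal |F x| ≤ ENNReal.ofReal ((x ⬝ᵥ x)⁻¹ * ∫ t in Ioi (0:ℝ), G t x * |κ t|) :=
          ENNReal.ofReal_le_ofReal h1
      _ = ENNReal.ofReal ((x ⬝ᵥ x)⁻¹) * ENNReal.ofReal (∫ t in Ioi (0:ℝ), G t x * |κ t|) :=
          ENNReal.ofReal_mul (inv_nonneg.2 (hdotnn x))
      _ ≤ ENNReal.ofReal ((x ⬝ᵥ x)⁻¹) * ∫⁻ t in Ioi (0:ℝ), ENNReal.ofReal (G t x * |κ t|) := by
          exact mul_le_mul_right (ofReal_int_le _ _ (fun t => mul_nonneg (hGnn t x) (abs_nonneg _))) _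
      _ = ∫⁻ t in Ioi (0:ℝ), ENNReal.ofReal ((x ⬝ᵥ x)⁻¹) * ENNReal.ofReal (G t x * |κ t|) := by
          rw [← lintegral_const_mul' _ _ ENNReal.ofReal_ne_top]
      _ = ∫⁻ t in Ioi (0:ℝ), ENNReal.ofReal ((x ⬝ᵥ x)⁻¹ * G t x) * ENNReal.ofReal |κ t| := by
          congr 1 with t
          rw [ENNReal.ofReal_mul (inv_nonneg.2 (hdotnn x)),
            ENNReal.ofReal_mul (hGnn t x), mul_assoc]
  -- main lintegral bound
  have hmain : ∫⁻ x, ENNReal.ofReal |F x|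
      ≤ ENNReal.ofReal ((1 / ((k:ℝ) - 2)) * ∫ t in Ioi (0:ℝ), t * |κ t|) := by
    calc ∫⁻ x, ENNReal.ofReal |F x|
        ≤ ∫⁻ x, ∫⁻ t in Ioi (0:ℝ),
            ENNReal.ofReal ((x ⬝ᵥ x)⁻¹ * G t x) * ENNReal.ofReal |κ t| :=
          lintegral_mono hpt
      _ = ∫⁻ t in Ioi (0:ℝ), ∫⁻ x,
            ENNReal.ofReal ((x ⬝ᵥ x)⁻¹ * G t x) * ENNReal.ofReal |κ t| := by
          apply lintegral_lintegral_swap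
          apply Measurable.aemeasurable
          exact (((hdotm.comp measurable_fst).inv.mul hjm).ennreal_ofReal).mul
            ((hκmeas.comp measurable_snd).abs.ennreal_ofReal)
      _ = ∫⁻ t in Ioi (0:ℝ),
            (∫⁻ x, ENNReal.ofReal ((x ⬝ᵥ x)⁻¹ * G t x)) * ENNReal.ofReal |κ t| := by
          congr 1 with t
          rw [lintegral_mul_const' _ _ ENNReal.ofReal_ne_top]
      _ ≤ ∫⁻ t in Ioi (0:ℝ), ENNReal.ofReal (t / ((k:ℝ)-2)) * ENNReal.ofReal |κ t| := by
          refine lintegral_mono_ae ?_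
          filter_upwards [ae_restrict_mem measurableSet_Ioi] with t ht
          exact mul_le_mul_left (keyt k hk m t ht) _
      _ = ∫⁻ t in Ioi (0:ℝ), ENNReal.ofReal ((1 / ((k:ℝ)-2))) * ENNReal.ofReal (t * |κ t|) := by
          refine lintegral_congr_ae ?_
          filter_upwards [ae_restrict_mem measurableSet_Ioi] with t ht
          rw [← ENNReal.ofReal_mul (div_nonneg (le_of_lt ht) (by linarith)),
            ← ENNReal.ofReal_mul (one_div_nonneg.2 (by linarith))]
          congr 1
          field_simp
      _ = ENNReal.ofReal ((1 / ((k:ℝ)-2))) * ∫⁻ t in Ioi (0:ℝ), ENNReal.ofReal (t * |κ t|) := by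
          rw [lintegral_const_mul' _ _ ENNReal.ofReal_ne_top]
      _ = ENNReal.ofReal ((1 / ((k:ℝ)-2))) * ENNReal.ofReal (∫ t in Ioi (0:ℝ), t * |κ t|) := by
          congr 1
          rw [← ofReal_integral_eq_lintegral_ofReal hκint ?_]
          filter_upwards [ae_restrict_mem measurableSet_Ioi] with t ht
          exact mul_nonneg (le_of_lt ht) (abs_nonneg _)
      _ = ENNReal.ofReal ((1 / ((k:ℝ) - 2)) * ∫ t in Ioi (0:ℝ), t * |κ t|) := by
          rw [← ENNReal.ofReal_mul (one_div_nonneg.2 (by linarith))]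
  have hInt : Integrable F volume := by
    refine ⟨hFm, ?_⟩
    rw [hasFiniteIntegral_iff_norm]
    simp only [Real.norm_eq_abs]
    exact lt_of_le_of_lt hmain ENNReal.ofReal_lt_top
  refine ⟨hInt, ?_⟩
  calc |∫ x, F x| ≤ ∫ x, |F x| := by
        simpa [Real.norm_eq_abs] using norm_integral_le_integral_norm (μ := volume) F
    _ = (∫⁻ x, ENNReal.ofReal |F x|).toReal := by
        have habs : AEStronglyMeasurable (fun x => |F x|) volume := by
          simpa [Real.norm_eq_abs] using hFm.norm
        rw [integral_eq_lintegral_of_nonneg_ae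
          (Filter.Eventually.of_forall fun x => abs_nonneg (F x)) habs]
    _ ≤ (1 / ((k : ℝ) - 2)) * ∫ t in Set.Ioi (0 : ℝ), t * |κ t| := by
        refine le_trans (ENNReal.toReal_mono ENNReal.ofReal_ne_top hmain) ?_
        rw [ENNReal.toReal_ofReal
          (mul_nonneg (one_div_nonneg.2 (by linarith)) (le_of_lt hκpos))]

end Aux
end

section
/- Suppose |h(x,y)| ≤ q₀/||x−y||², h(x,y) depends only on x−y, β̃−β and β̂−β̃ are independent random vectors with E[β̃−β] = γ, and ω(h) := E[h(β̂,β̃)²||β̂−β̃||²] < ∞. Then |η(h)| := |E[h(β̂,β̃)(β̂−β)'(β̂−β̃)]| ≤ q₀ + ||γ||·ω(h)^{1/2}; in particular η(h) is finite. -/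
open Matrix MeasureTheory ProbabilityTheory

lemma dotProduct_self_nonneg' {k : ℕ} (v : Fin k → ℝ) : 0 ≤ v ⬝ᵥ v :=
  Finset.sum_nonneg fun i _ => mul_self_nonneg (v i)

lemma dotProduct_self_pos' {k : ℕ} {v : Fin k → ℝ} (hv : v ≠ 0) : 0 < v ⬝ᵥ v := by
  have := Matrix.dotProduct_self_star_pos_iff (v := v)
  simpa [star_trivial] using this.mpr hv

lemma sq_apply_le_dotProduct_self {k : ℕ} (v : Fin k → ℝ) (i : Fin k) :
    v i ^ 2 ≤ v ⬝ᵥ v := by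
  have : v i * v i ≤ ∑ j, v j * v j :=
    Finset.single_le_sum (f := fun j => v j * v j)
      (fun j _ => mul_self_nonneg (v j)) (Finset.mem_univ i)
  simpa [dotProduct, sq] using this

/-- Suppose `|h(x,y)| ≤ q₀/‖x−y‖²`, `h(x,y)` depends only on `x−y`, the random
vectors `β̃−β` and `β̂−β̃` are independent with `E[β̃−β] = γ`, and
`ω(h) := E[h(β̂,β̃)²‖β̂−β̃‖²] < ∞`. Then
`|η(h)| := |E[h(β̂,β̃)(β̂−β)'(β̂−β̃)]| ≤ q₀ + ‖γ‖·ω(h)^{1/2}`;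
in particular `η(h)` is finite. -/
theorem eta_h_bound
    {Ω : Type*} [MeasurableSpace Ω] (μ : Measure Ω) [IsProbabilityMeasure μ]
    (k : ℕ) (h : (Fin k → ℝ) → (Fin k → ℝ) → ℝ) (g : (Fin k → ℝ) → ℝ)
    (hgmeas : Measurable g) (hH2 : ∀ x y, h x y = g (x - y))
    (q₀ : ℝ) (hq₀ : 0 < q₀)
    (hH1 : ∀ x y : Fin k → ℝ, x ≠ y → |h x y| ≤ q₀ / ((x - y) ⬝ᵥ (x - y)))
    (betaHat betaTilde : Ω → Fin k → ℝ) (β γ : Fin k → ℝ)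
    (hb1 : AEMeasurable betaHat μ) (hb2 : AEMeasurable betaTilde μ)
    (hne : ∀ᵐ ω ∂μ, betaHat ω ≠ betaTilde ω)
    (hindep : IndepFun (fun ω => betaTilde ω - β) (fun ω => betaHat ω - betaTilde ω) μ)
    (hmeanint : ∀ i, Integrable (fun ω => betaTilde ω i - β i) μ)
    (hmean : ∀ i, ∫ ω, (betaTilde ω i - β i) ∂μ = γ i)
    (hωint : Integrable (fun ω => (h (betaHat ω) (betaTilde ω)) ^ 2
      * ((betaHat ω - betaTilde ω) ⬝ᵥ (betaHat ω - betaTilde ω))) μ) :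
    Integrable (fun ω => h (betaHat ω) (betaTilde ω)
        * ((betaHat ω - β) ⬝ᵥ (betaHat ω - betaTilde ω))) μ ∧
      |∫ ω, h (betaHat ω) (betaTilde ω)
          * ((betaHat ω - β) ⬝ᵥ (betaHat ω - betaTilde ω)) ∂μ|
        ≤ q₀ + Real.sqrt (γ ⬝ᵥ γ) *
            Real.sqrt (∫ ω, (h (betaHat ω) (betaTilde ω)) ^ 2
              * ((betaHat ω - betaTilde ω) ⬝ᵥ (betaHat ω - betaTilde ω)) ∂μ) := by
  classical
  set X : Ω → Fin k → ℝ := fun ω => betaHat ω - betaTilde ω with hXdef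
  set Y : Ω → Fin k → ℝ := fun ω => betaTilde ω - β with hYdef
  have hX : AEMeasurable X μ := hb1.sub hb2
  have hXi : ∀ i, AEMeasurable (fun ω => X ω i) μ :=
    fun i => (measurable_pi_apply i).comp_aemeasurable hX
  have hgX : AEMeasurable (fun ω => g (X ω)) μ := hgmeas.comp_aemeasurable hX
  have hdot : AEMeasurable (fun ω => X ω ⬝ᵥ X ω) μ := by
    simp only [dotProduct]
    exact Finset.aemeasurable_fun_sum _ fun i _ => (hXi i).mul (hXi i)
  -- rewrite h in terms of g
  have hgrew : ∀ ω, h (betaHat ω) (betaTilde ω) = g (X ω) := fun ω => hH2 _ _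
  -- the ω(h) integrand in terms of g
  have hωint' : Integrable (fun ω => g (X ω) ^ 2 * (X ω ⬝ᵥ X ω)) μ := by
    simpa only [hgrew] using hωint
  -- term 1
  set t1 : Ω → ℝ := fun ω => g (X ω) * (X ω ⬝ᵥ X ω) with ht1def
  have hbound1 : ∀ᵐ ω ∂μ, ‖t1 ω‖ ≤ q₀ := by
    filter_upwards [hne] with ω hω
    have hXne : X ω ≠ 0 := sub_ne_zero.mpr hω
    have hpos : 0 < X ω ⬝ᵥ X ω := dotProduct_self_pos' hXne
    have h1 : |g (X ω)| ≤ q₀ / (X ω ⬝ᵥ X ω) := by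
      show |g (betaHat ω - betaTilde ω)| ≤
        q₀ / ((betaHat ω - betaTilde ω) ⬝ᵥ (betaHat ω - betaTilde ω))
      rw [← hH2]
      exact hH1 _ _ hω
    have : |g (X ω)| * (X ω ⬝ᵥ X ω) ≤ q₀ := by
      rw [← le_div_iff₀ hpos]; exact h1
    calc ‖t1 ω‖ = |g (X ω)| * |X ω ⬝ᵥ X ω| := by
          simp [ht1def, Real.norm_eq_abs, abs_mul]
      _ = |g (X ω)| * (X ω ⬝ᵥ X ω) := by rw [abs_of_pos hpos]
      _ ≤ q₀ := this
  have ht1meas : AEStronglyMeasurable t1 μ := (hgX.mul hdot).aestronglyMeasurable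
  have ht1int : Integrable t1 μ :=
    Integrable.mono' (integrable_const q₀) ht1meas hbound1
  have ht1bound : |∫ ω, t1 ω ∂μ| ≤ q₀ := by
    have := norm_integral_le_of_norm_le_const (μ := μ) (f := t1) (C := q₀) hbound1
    simpa [Real.norm_eq_abs, measure_univ] using this
  -- the functions f i
  set f : Fin k → Ω → ℝ := fun i ω => g (X ω) * X ω i with hfdef
  have hfmeas : ∀ i, AEStronglyMeasurable (f i) μ :=
    fun i => (hgX.mul (hXi i)).aestronglyMeasurable
  have hf2int : ∀ i, Integrable (fun ω => f i ω ^ 2) μ := by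
    intro i
    refine Integrable.mono' hωint' ((hfmeas i).pow 2) ?_
    refine Filter.Eventually.of_forall fun ω => ?_
    have h1 : X ω i ^ 2 ≤ X ω ⬝ᵥ X ω := sq_apply_le_dotProduct_self _ i
    have h2 : g (X ω) ^ 2 * X ω i ^ 2 ≤ g (X ω) ^ 2 * (X ω ⬝ᵥ X ω) :=
      mul_le_mul_of_nonneg_left h1 (sq_nonneg _)
    calc ‖f i ω ^ 2‖ = f i ω ^ 2 := by
          rw [Real.norm_eq_abs, abs_of_nonneg (sq_nonneg _)]
      _ = g (X ω) ^ 2 * X ω i ^ 2 := by simp [hfdef, mul_pow]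
      _ ≤ g (X ω) ^ 2 * (X ω ⬝ᵥ X ω) := h2
  have hfmem : ∀ i, MemLp (f i) 2 μ := fun i =>
    (memLp_two_iff_integrable_sq (hfmeas i)).2 (hf2int i)
  have hfint : ∀ i, Integrable (f i) μ := fun i => (hfmem i).integrable one_le_two
  set m : Fin k → ℝ := fun i => ∫ ω, f i ω ∂μ with hmdef
  have hm2 : ∀ i, m i ^ 2 ≤ ∫ ω, f i ω ^ 2 ∂μ := by
    intro i
    have hv := variance_nonneg (f i) μ
    rw [variance_eq_sub (hfmem i)] at hv
    have : (∫ ω, f i ω ∂μ) ^ 2 ≤ ∫ ω, f i ω ^ 2 ∂μ := by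
      simpa [Pi.pow_apply] using sub_nonneg.mp hv
    simpa [hmdef] using this
  -- independence per coordinate
  have hindep_i : ∀ i, IndepFun (fun ω => Y ω i) (f i) μ := by
    intro i
    have := hindep.comp (φ := fun v : Fin k → ℝ => v i)
      (ψ := fun v : Fin k → ℝ => g v * v i)
      (measurable_pi_apply (X := fun _ : Fin k => ℝ) i) (hgmeas.mul (measurable_pi_apply i))
    exact this
  have hYi_int : ∀ i, Integrable (fun ω => Y ω i) μ := by
    intro i
    have := hmeanint i
    simpa [hYdef] using this
  have hprodint : ∀ i, Integrable (fun ω => Y ω i * f i ω) μ :=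
    fun i => (hindep_i i).integrable_mul (hYi_int i) (hfint i)
  have hprodval : ∀ i, ∫ ω, Y ω i * f i ω ∂μ = γ i * m i := by
    intro i
    have h1 := (hindep_i i).integral_mul_eq_mul_integral
      (hYi_int i).aestronglyMeasurable (hfmeas i)
    have h2 : ∫ ω, Y ω i ∂μ = γ i := by
      have := hmean i; simpa [hYdef] using this
    calc ∫ ω, Y ω i * f i ω ∂μ
        = (∫ ω, Y ω i ∂μ) * ∫ ω, f i ω ∂μ := by
          simpa [Pi.mul_apply] using h1
      _ = γ i * m i := by rw [h2]
  -- term 2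
  set t2 : Ω → ℝ := fun ω => g (X ω) * (Y ω ⬝ᵥ X ω) with ht2def
  have ht2sum : ∀ ω, t2 ω = ∑ i, Y ω i * f i ω := by
    intro ω
    simp only [ht2def, hfdef, dotProduct, Finset.mul_sum]
    exact Finset.sum_congr rfl fun i _ => by ring
  have ht2int : Integrable t2 μ := by
    have : Integrable (fun ω => ∑ i, Y ω i * f i ω) μ :=
      integrable_finset_sum _ fun i _ => hprodint i
    exact this.congr (Filter.Eventually.of_forall fun ω => (ht2sum ω).symm)
  have ht2val : ∫ ω, t2 ω ∂μ = γ ⬝ᵥ m := by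
    rw [integral_congr_ae (Filter.Eventually.of_forall ht2sum),
      integral_finset_sum _ fun i _ => hprodint i]
    simp only [dotProduct]
    exact Finset.sum_congr rfl fun i _ => hprodval i
  -- bound on m ⬝ᵥ m
  set W : ℝ := ∫ ω, g (X ω) ^ 2 * (X ω ⬝ᵥ X ω) ∂μ with hWdef
  have hWnonneg : 0 ≤ W := by
    refine integral_nonneg fun ω => ?_
    exact mul_nonneg (sq_nonneg _) (dotProduct_self_nonneg' _)
  have hsum_f2 : ∑ i, (∫ ω, f i ω ^ 2 ∂μ) = W := by
    rw [hWdef, ← integral_finset_sum _ fun i _ => hf2int i]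
    refine integral_congr_ae (Filter.Eventually.of_forall fun ω => ?_)
    simp only [hfdef, dotProduct, Finset.mul_sum, mul_pow]
    exact Finset.sum_congr rfl fun i _ => by ring
  have hmm : m ⬝ᵥ m ≤ W := by
    rw [← hsum_f2]
    simp only [dotProduct]
    refine Finset.sum_le_sum fun i _ => ?_
    have := hm2 i
    calc m i * m i = m i ^ 2 := (sq (m i)).symm
      _ ≤ _ := hm2 i
  have ht2bound : |∫ ω, t2 ω ∂μ| ≤ Real.sqrt (γ ⬝ᵥ γ) * Real.sqrt W := by
    rw [ht2val]
    have hcs : (γ ⬝ᵥ m) ^ 2 ≤ (γ ⬝ᵥ γ) * (m ⬝ᵥ m) := by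
      have := Finset.sum_mul_sq_le_sq_mul_sq Finset.univ γ m
      simpa [dotProduct, sq] using this
    have h1 : |γ ⬝ᵥ m| ≤ Real.sqrt ((γ ⬝ᵥ γ) * (m ⬝ᵥ m)) := by
      rw [← Real.sqrt_sq_eq_abs]
      exact Real.sqrt_le_sqrt hcs
    have h2 : Real.sqrt ((γ ⬝ᵥ γ) * (m ⬝ᵥ m))
        = Real.sqrt (γ ⬝ᵥ γ) * Real.sqrt (m ⬝ᵥ m) :=
      Real.sqrt_mul (dotProduct_self_nonneg' _) _
    have h3 : Real.sqrt (m ⬝ᵥ m) ≤ Real.sqrt W := Real.sqrt_le_sqrt hmm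
    calc |γ ⬝ᵥ m| ≤ Real.sqrt (γ ⬝ᵥ γ) * Real.sqrt (m ⬝ᵥ m) := by rw [← h2]; exact h1
      _ ≤ Real.sqrt (γ ⬝ᵥ γ) * Real.sqrt W :=
          mul_le_mul_of_nonneg_left h3 (Real.sqrt_nonneg _)
  -- decomposition of the main integrand
  have hdecomp : ∀ ω, g (X ω) * ((betaHat ω - β) ⬝ᵥ X ω) = t1 ω + t2 ω := by
    intro ω
    have hsplit : betaHat ω - β = X ω + Y ω := by
      simp only [hXdef, hYdef]; abel
    rw [hsplit, add_dotProduct, ht1def, ht2def]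
    ring
  have hFint : Integrable (fun ω => g (X ω) * ((betaHat ω - β) ⬝ᵥ X ω)) μ := by
    have := ht1int.add ht2int
    exact this.congr (Filter.Eventually.of_forall fun ω => (hdecomp ω).symm)
  have hFval : |∫ ω, g (X ω) * ((betaHat ω - β) ⬝ᵥ X ω) ∂μ|
      ≤ q₀ + Real.sqrt (γ ⬝ᵥ γ) * Real.sqrt W := by
    rw [integral_congr_ae (Filter.Eventually.of_forall hdecomp),
      integral_add ht1int ht2int]
    calc |(∫ ω, t1 ω ∂μ) + ∫ ω, t2 ω ∂μ|
        ≤ |∫ ω, t1 ω ∂μ| + |∫ ω, t2 ω ∂μ| := abs_add_le _ _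
      _ ≤ q₀ + Real.sqrt (γ ⬝ᵥ γ) * Real.sqrt W := add_le_add ht1bound ht2bound
  constructor
  · simpa only [hgrew] using hFint
  · simpa only [hgrew] using hFval
end

section
/- Let β̂ = (X'X)⁻¹X'y be the least squares estimator in the model y = Xβ + ε with ε ~ N_n(0, σ²I_n), and let β̃ = β̂ + J(Rβ̂ − r) with J = (X'X)⁻¹R'[R(X'X)⁻¹R']⁻¹ for a full-rank q×k matrix R (q ≤ k) and r ∈ ℝ^q. Then with A = σ²(X'X)⁻¹, Ξ = Cov(β̂−β̃) = JRA, γ = E[β̃−β] = J(Rβ−r), and Λ = A⁻¹, the matrix Λ^{1/2}ΞΛ^{1/2} is idempotent and ΛΞΛγ = Λγ. -/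
open Matrix

section

open scoped ComplexOrder

/-- `Matrix.PosSemidef.sqrt` as it stood in Mathlib (Dec 2024); removed from Mathlib since. -/
noncomputable def Matrix.PosSemidef.sqrt {n 𝕜 : Type*} [Fintype n] [DecidableEq n] [RCLike 𝕜]
    {A : Matrix n n 𝕜} (hA : A.PosSemidef) : Matrix n n 𝕜 :=
  hA.1.eigenvectorUnitary.1 * diagonal ((↑) ∘ (√·) ∘ hA.1.eigenvalues) *
  (star hA.1.eigenvectorUnitary : Matrix n n 𝕜)

theorem Matrix.PosSemidef.sqrt_mul_self_port {n 𝕜 : Type*} [Fintype n] [DecidableEq n]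
    [RCLike 𝕜] {A : Matrix n n 𝕜} (hA : A.PosSemidef) : hA.sqrt * hA.sqrt = A := by
  conv_rhs => rw [hA.1.spectral_theorem, Unitary.conjStarAlgAut_apply]
  unfold Matrix.PosSemidef.sqrt
  have hU : (star hA.1.eigenvectorUnitary : Matrix n n 𝕜) * hA.1.eigenvectorUnitary.1 = 1 :=
    Unitary.coe_star_mul_self _
  rw [show ∀ (P D S : Matrix n n 𝕜), P * D * S * (P * D * S) = P * (D * (S * P) * D) * S
    from fun P D S => by simp only [Matrix.mul_assoc], hU, Matrix.mul_one,
    diagonal_mul_diagonal]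
  congr 3
  funext i
  simp only [Function.comp_apply, ← RCLike.ofReal_mul, Real.mul_self_sqrt (hA.eigenvalues_nonneg i)]

end

/-- In the restricted least squares set-up: with `A = σ²(X'X)⁻¹`,
`J = (X'X)⁻¹R'[R(X'X)⁻¹R']⁻¹`, `Ξ = Cov(β̂−β̃) = JRA`, `γ = E[β̃−β] = J(Rβ−r)` and
`Λ = A⁻¹`, the matrix `Λ^{1/2}ΞΛ^{1/2}` is idempotent and `ΛΞΛγ = Λγ`. -/
theorem restricted_ls_assumption_H3
    (n k q : ℕ) (hq : q ≤ k) (X : Matrix (Fin n) (Fin k) ℝ)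
    (hXX : (Xᵀ * X).PosDef) (hXXunit : IsUnit (Xᵀ * X))
    (R : Matrix (Fin q) (Fin k) ℝ) (hRrank : R.rank = q)
    (hRunit : IsUnit (R * (Xᵀ * X)⁻¹ * Rᵀ))
    (σ : ℝ) (hσ : 0 < σ) (β : Fin k → ℝ) (r : Fin q → ℝ)
    (A J' Ξ Λ : Matrix (Fin k) (Fin k) ℝ) (γ : Fin k → ℝ)
    (hA : A = σ ^ 2 • (Xᵀ * X)⁻¹)
    (hJ : J' = (Xᵀ * X)⁻¹ * Rᵀ * (R * (Xᵀ * X)⁻¹ * Rᵀ)⁻¹ * R)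
    (hΞ : Ξ = J' * A)
    (hγ : γ = ((Xᵀ * X)⁻¹ * Rᵀ * (R * (Xᵀ * X)⁻¹ * Rᵀ)⁻¹).mulVec (R.mulVec β - r))
    (hΛ : Λ = A⁻¹) (hΛpsd : Λ.PosSemidef) :
    (hΛpsd.sqrt * Ξ * hΛpsd.sqrt) * (hΛpsd.sqrt * Ξ * hΛpsd.sqrt)
        = hΛpsd.sqrt * Ξ * hΛpsd.sqrt ∧
      (Λ * Ξ * Λ).mulVec γ = Λ.mulVec γ := by
  set K := Xᵀ * X with hK
  set M := R * K⁻¹ * Rᵀ with hM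
  have hKdet : IsUnit K.det := (Matrix.isUnit_iff_isUnit_det _).mp hXXunit
  have hMdet : IsUnit M.det := (Matrix.isUnit_iff_isUnit_det _).mp hRunit
  have hKinv : K⁻¹ * K = 1 := Matrix.nonsing_inv_mul _ hKdet
  have hKinv' : K * K⁻¹ = 1 := Matrix.mul_nonsing_inv _ hKdet
  have hMinv : M⁻¹ * M = 1 := Matrix.nonsing_inv_mul _ hMdet
  have hσ2 : (σ ^ 2 : ℝ) ≠ 0 := pow_ne_zero _ hσ.ne'
  -- Λ = σ⁻² • K
  have hΛval : Λ = (σ ^ 2)⁻¹ • K := by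
    rw [hΛ, hA]
    refine Matrix.inv_eq_right_inv ?_
    rw [Matrix.smul_mul, Matrix.mul_smul, smul_smul, hKinv, mul_inv_cancel₀ hσ2, one_smul]
  have hAΛ : A * Λ = 1 := by
    rw [hΛval, hA, Matrix.smul_mul, Matrix.mul_smul, smul_smul, hKinv,
      mul_inv_cancel₀ hσ2, one_smul]
  have hΛA : Λ * A = 1 := by
    rw [hΛval, hA, Matrix.smul_mul, Matrix.mul_smul, smul_smul, hKinv',
      inv_mul_cancel₀ hσ2, one_smul]
  -- key cancellation
  have hcancel : ∀ (m : ℕ) (Z : Matrix (Fin q) (Fin m) ℝ),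
      M⁻¹ * (R * (K⁻¹ * (Rᵀ * Z))) = Z := by
    intro m Z
    calc M⁻¹ * (R * (K⁻¹ * (Rᵀ * Z))) = (M⁻¹ * (R * K⁻¹ * Rᵀ)) * Z := by
          simp [Matrix.mul_assoc]
      _ = Z := by rw [← hM, hMinv, Matrix.one_mul]
  have hJidem : J' * J' = J' := by
    rw [hJ]
    calc K⁻¹ * Rᵀ * M⁻¹ * R * (K⁻¹ * Rᵀ * M⁻¹ * R)
        = K⁻¹ * Rᵀ * (M⁻¹ * (R * (K⁻¹ * (Rᵀ * (M⁻¹ * R))))) := by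
          simp [Matrix.mul_assoc]
      _ = K⁻¹ * Rᵀ * (M⁻¹ * R) := by rw [hcancel]
      _ = K⁻¹ * Rᵀ * M⁻¹ * R := by simp [Matrix.mul_assoc]
  have hΞΛΞ : Ξ * Λ * Ξ = Ξ := by
    rw [hΞ, Matrix.mul_assoc, Matrix.mul_assoc, ← Matrix.mul_assoc A Λ,
      hAΛ, Matrix.one_mul, ← Matrix.mul_assoc, hJidem]
  have hsq : hΛpsd.sqrt * hΛpsd.sqrt = Λ := hΛpsd.sqrt_mul_self_port
  constructor
  · calc hΛpsd.sqrt * Ξ * hΛpsd.sqrt * (hΛpsd.sqrt * Ξ * hΛpsd.sqrt)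
        = hΛpsd.sqrt * (Ξ * (hΛpsd.sqrt * hΛpsd.sqrt) * Ξ) * hΛpsd.sqrt := by
          simp only [Matrix.mul_assoc]
      _ = hΛpsd.sqrt * Ξ * hΛpsd.sqrt := by
          rw [hsq, hΞΛΞ]
  · have hPP : K⁻¹ * Rᵀ * M⁻¹ * R * (K⁻¹ * Rᵀ * M⁻¹) = K⁻¹ * Rᵀ * M⁻¹ := by
      calc K⁻¹ * Rᵀ * M⁻¹ * R * (K⁻¹ * Rᵀ * M⁻¹)
          = K⁻¹ * Rᵀ * (M⁻¹ * (R * (K⁻¹ * (Rᵀ * M⁻¹)))) := by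
            simp only [Matrix.mul_assoc]
        _ = K⁻¹ * Rᵀ * M⁻¹ := by rw [hcancel]
    have hJγ : J'.mulVec γ = γ := by
      rw [hγ, hJ, Matrix.mulVec_mulVec, hPP]
    have hΛΞΛ : Λ * Ξ * Λ = Λ * J' := by
      rw [hΞ, Matrix.mul_assoc, Matrix.mul_assoc, hAΛ, Matrix.mul_one]
    rw [hΛΞΛ, ← Matrix.mulVec_mulVec, hJγ]
end
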